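/- In a strongly continuous domain L, the sets ⇑_s u for u ∈ L form a basis for the strong Scott topology, and for every subset X ⊆ L, int_{σ_s(L)} X = ⋃{⇑_s u : ⇑_s u ⊆ X}. -/

import Mathlib

open Set

variable {L : Type*}

/-- A directed subset: nonempty and directed under `≤`. -/
def DirSet [Preorder L] (D : Set L) : Prop := D.Nonempty ∧ DirectedOn (· ≤ ·) D

/-- Strongly Scott open sets (the family `σ^s(L)`). -/
def StronglyScottOpen [Preorder L] [SupSet L] (U : Set L) : Prop :=
  IsUpperSet U ∧ ∀ D : Set L, DirSet D → ∀ x : L,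
    Ici (sSup D) ∩ Ici x ⊆ U → ∃ d ∈ D, Ici d ∩ Ici x ⊆ U

/-- The strong Scott topology `σ_s(L)`, generated by the strongly Scott open sets. -/
def strongScott (L : Type*) [Preorder L] [SupSet L] : TopologicalSpace L :=
  TopologicalSpace.generateFrom {U | StronglyScottOpen U}

/-- Scott open sets. -/
def ScottOpen [Preorder L] [SupSet L] (U : Set L) : Prop :=
  IsUpperSet U ∧ ∀ D : Set L, DirSet D → sSup D ∈ U → (D ∩ U).Nonempty

/-- The Scott topology `σ(L)`. -/
def scottTop (L : Type*) [Preorder L] [SupSet L] : TopologicalSpace L :=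
  TopologicalSpace.generateFrom {U | ScottOpen U}

/-- The upper topology `υ(L)`. -/
def upperTop (L : Type*) [Preorder L] : TopologicalSpace L :=
  TopologicalSpace.generateFrom {U | ∃ x : L, U = (Iic x)ᶜ}

/-- The lower topology `ω(L)`. -/
def lowerTop (L : Type*) [Preorder L] : TopologicalSpace L :=
  TopologicalSpace.generateFrom {U | ∃ x : L, U = (Ici x)ᶜ}

/-- The strong way-below relation `x ≪_s y`. -/
def SWayBelow [Preorder L] (x y : L) : Prop :=
  ∀ D : Set L, DirSet D → ∀ a : L,
    (⋂ d ∈ D, Ici d) ∩ Ici a ⊆ Ici y → ∃ d ∈ D, Ici d ∩ Ici a ⊆ Ici x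

/-- The way-below relation `x ≪ y`. -/
def WayBelow [Preorder L] [SupSet L] (x y : L) : Prop :=
  ∀ D : Set L, DirSet D → y ≤ sSup D → ∃ d ∈ D, x ≤ d

/-- `X` with topology `t` is a C-space (w.r.t. the order of `L`). -/
def IsCSpace [Preorder L] (t : TopologicalSpace L) : Prop :=
  ∀ U : Set L, @IsOpen _ (t) U → ∀ x ∈ U, ∃ y ∈ U,
    x ∈ @interior L t (Ici y) ∧ Ici y ⊆ U

/-- `L` is a strongly continuous domain. -/
def StronglyContinuousDomain (L : Type*) [Preorder L] [SupSet L] : Prop :=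
  IsCSpace (strongScott L)

/-- `L` is a continuous domain. -/
def ContinuousDomain (L : Type*) [Preorder L] [SupSet L] : Prop :=
  ∀ x : L, DirSet {y | WayBelow y x} ∧ IsLUB {y | WayBelow y x} x

/-- `L` is a hypercontinuous domain. -/
def HypercontinuousDomain (L : Type*) [Preorder L] : Prop :=
  ∀ x : L, DirSet {y | x ∈ @interior L (upperTop L) (Ici y)} ∧
    IsLUB {y | x ∈ @interior L (upperTop L) (Ici y)} x

/-- The strong Lawson topology `λ_s(L)`: common refinement of `σ_s(L)` and `ω(L)`. -/
def strongLawson (L : Type*) [Preorder L] [SupSet L] : TopologicalSpace L :=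
  TopologicalSpace.generateFrom
    {U | @IsOpen _ (strongScott L) U ∨ @IsOpen _ (lowerTop L) U}

section Aux
variable [CompletePartialOrder L]

lemma sso_univ : StronglyScottOpen (Set.univ : Set L) :=
  ⟨isUpperSet_univ, fun D hD _ _ => ⟨hD.1.choose, hD.1.choose_spec, by simp⟩⟩

lemma sso_inter {U V : Set L} (hU : StronglyScottOpen U) (hV : StronglyScottOpen V) :
    StronglyScottOpen (U ∩ V) := by
  refine ⟨hU.1.inter hV.1, fun D hD x h => ?_⟩
  obtain ⟨d₁, hd₁, h₁⟩ := hU.2 D hD x (h.trans inter_subset_left)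
  obtain ⟨d₂, hd₂, h₂⟩ := hV.2 D hD x (h.trans inter_subset_right)
  obtain ⟨d, hd, hd₁d, hd₂d⟩ := hD.2 d₁ hd₁ d₂ hd₂
  exact ⟨d, hd, fun z hz => ⟨h₁ ⟨hd₁d.trans hz.1, hz.2⟩, h₂ ⟨hd₂d.trans hz.1, hz.2⟩⟩⟩

lemma strongScott_open_basic {U : Set L} (h : @IsOpen _ (strongScott L) U) :
    ∀ x ∈ U, ∃ W, StronglyScottOpen W ∧ x ∈ W ∧ W ⊆ U := by
  have h' : TopologicalSpace.GenerateOpen {U : Set L | StronglyScottOpen U} U := h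
  clear h
  induction h' with
  | basic V hV => exact fun x hx => ⟨V, hV, hx, subset_rfl⟩
  | univ => exact fun x _ => ⟨univ, sso_univ, mem_univ x, subset_rfl⟩
  | inter V W _ _ ihV ihW =>
      rintro x ⟨hxV, hxW⟩
      obtain ⟨A, hA, hxA, hAV⟩ := ihV x hxV
      obtain ⟨B, hB, hxB, hBW⟩ := ihW x hxW
      exact ⟨A ∩ B, sso_inter hA hB, ⟨hxA, hxB⟩, inter_subset_inter hAV hBW⟩
  | sUnion S _ ih =>
      rintro x ⟨V, hV, hxV⟩
      obtain ⟨W, hW, hxW, hWV⟩ := ih V hV x hxV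
      exact ⟨W, hW, hxW, hWV.trans (subset_sUnion_of_mem hV)⟩

lemma swb_le {u y : L} (h : SWayBelow u y) : u ≤ y := by
  obtain ⟨d, hd, hsub⟩ := h ({y} : Set L)
    ⟨⟨y, rfl⟩, directedOn_singleton y⟩ y (by simp)
  rcases hd with rfl
  exact (hsub ⟨le_refl d, le_refl d⟩ : u ≤ d)

lemma mem_interior_swb {u y : L} (h : y ∈ @interior _ (strongScott L) (Ici u)) :
    SWayBelow u y := by
  letI := strongScott L
  obtain ⟨W, hW, hyW, hWu⟩ :=
    strongScott_open_basic (U := interior (Ici u)) isOpen_interior y h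
  intro D hD a hsub
  have h1 : Ici (sSup D) ∩ Ici a ⊆ W := by
    intro z hz
    have hz' : z ∈ (⋂ d ∈ D, Ici d) ∩ Ici a :=
      ⟨mem_iInter₂.2 fun d hd => le_trans (hD.2.le_sSup hd) hz.1, hz.2⟩
    exact hW.1 (hsub hz') hyW
  obtain ⟨d, hd, hdsub⟩ := hW.2 D hD a h1
  exact ⟨d, hd, hdsub.trans (hWu.trans interior_subset)⟩

lemma sso_compl_Iic (w : L) : StronglyScottOpen ((Iic w)ᶜ : Set L) := by
  refine ⟨(isLowerSet_Iic w).compl, fun D hD x h => ?_⟩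
  by_contra hc
  push_neg at hc
  have hbd : ∀ d ∈ D, d ≤ w := by
    intro d hd
    obtain ⟨z, hz, hzw⟩ := not_subset.1 (hc d hd)
    have : z ≤ w := not_not.1 hzw
    exact hz.1.trans this
  have hxw : x ≤ w := by
    obtain ⟨d, hd⟩ := hD.1
    obtain ⟨z, hz, hzw⟩ := not_subset.1 (hc d hd)
    exact hz.2.trans (not_not.1 hzw)
  have : w ∈ Ici (sSup D) ∩ Ici x := ⟨hD.2.sSup_le hbd, hxw⟩
  exact h this (le_refl w)

lemma swb_mem_interior (hL : StronglyContinuousDomain L) {u y : L} (h : SWayBelow u y) :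
    y ∈ @interior _ (strongScott L) (Ici u) := by
  letI := strongScott L
  set D := {z : L | y ∈ interior (Ici z)} with hDdef
  obtain ⟨z₀, _, hz₀, _⟩ := hL univ isOpen_univ y (mem_univ y)
  have hne : D.Nonempty := ⟨z₀, hz₀⟩
  have hdir : DirectedOn (· ≤ ·) D := by
    rintro z₁ hz₁ z₂ hz₂
    have hop : IsOpen (interior (Ici z₁) ∩ interior (Ici z₂)) :=
      isOpen_interior.inter isOpen_interior
    obtain ⟨z, _, hyz, hzsub⟩ := hL _ hop y ⟨hz₁, hz₂⟩
    have hzz := hzsub (self_mem_Ici)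
    exact ⟨z, hyz, interior_subset hzz.1, interior_subset hzz.2⟩
  have hDir : DirSet D := ⟨hne, hdir⟩
  have hub : ∀ w : L, (∀ z ∈ D, z ≤ w) → y ≤ w := by
    intro w hw
    by_contra hyw
    have hopen : IsOpen ((Iic w)ᶜ : Set L) :=
      TopologicalSpace.GenerateOpen.basic _ (sso_compl_Iic w)
    obtain ⟨z, hzU, hyz, _⟩ := hL _ hopen y hyw
    exact hzU (hw z hyz)
  obtain ⟨a, ha⟩ := hne
  have hsub : (⋂ d ∈ D, Ici d) ∩ Ici a ⊆ Ici y := by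
    rintro z ⟨hz1, _⟩
    exact hub z fun d hd => mem_iInter₂.1 hz1 d hd
  obtain ⟨z, hzD, hzsub⟩ := h D hDir a hsub
  have h2 : interior (Ici z) ∩ interior (Ici a) ⊆ interior (Ici u) := by
    rw [← interior_inter]
    exact interior_mono hzsub
  exact h2 ⟨hzD, ha⟩

end Aux

theorem sWayBelow_sets_basis_and_interior [CompletePartialOrder L]
    (hL : StronglyContinuousDomain L) :
    @TopologicalSpace.IsTopologicalBasis L (strongScott L)
      {S : Set L | ∃ u : L, S = {y | SWayBelow u y}} ∧
    ∀ X : Set L, @interior L (strongScott L) X =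
      ⋃ u ∈ {u : L | {y | SWayBelow u y} ⊆ X}, {y | SWayBelow u y} := by
  letI := strongScott L
  have key : ∀ u : L, {y : L | SWayBelow u y} = interior (Ici u) := fun u =>
    Set.ext fun y => ⟨fun h => swb_mem_interior hL h, fun h => mem_interior_swb h⟩
  constructor
  · refine TopologicalSpace.isTopologicalBasis_of_isOpen_of_nhds ?_ ?_
    · rintro S ⟨u, rfl⟩
      rw [key u]
      exact isOpen_interior
    · intro x U hxU hU
      obtain ⟨v, _, hxv, hvsub⟩ := hL U hU x hxU
      refine ⟨{y | SWayBelow v y}, ⟨v, rfl⟩, ?_, fun y hy => hvsub (swb_le hy)⟩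
      rw [key v]; exact hxv
  · intro X
    apply Subset.antisymm
    · intro x hx
      obtain ⟨v, _, hxv, hvsub⟩ := hL (interior X) isOpen_interior x hx
      refine mem_iUnion₂.2 ⟨v, fun y hy => interior_subset (hvsub (swb_le hy)), ?_⟩
      rw [key v]; exact hxv
    · refine iUnion₂_subset fun u hu => ?_
      have h1 : {y : L | SWayBelow u y} ⊆ X := hu
      rw [key u] at h1
      exact ((key u).subset).trans (interior_maximal h1 isOpen_interior)
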